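/- Let C be an abelian monoidal category whose tensor product is additive in each variable and right exact in each variable. Let n ≥ 1 and let M'_i →^{f_i} M_i →^{p_i} M''_i → 0, for i = 1, …, n, be exact sequences in C. Then the sequence ⨁_{k=1}^{n} (M_1 ⊗ ⋯ ⊗ M_{k-1} ⊗ M'_k ⊗ M_{k+1} ⊗ ⋯ ⊗ M_n) → M_1 ⊗ ⋯ ⊗ M_n →^{p_1 ⊗ ⋯ ⊗ p_n} M''_1 ⊗ ⋯ ⊗ M''_n → 0 is exact, where the k-th component of the first morphism is 𝟙 ⊗ ⋯ ⊗ f_k ⊗ ⋯ ⊗ 𝟙 (with f_k in the k-th tensor factor and identities elsewhere). -/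

import Mathlib

open CategoryTheory CategoryTheory.Limits MonoidalCategory ZeroObject

attribute [local instance] CategoryTheory.Abelian.hasFiniteBiproducts

variable {C : Type*} [Category C] [MonoidalCategory C]

/-- The iterated tensor product `M 0 ⊗ M 1 ⊗ ⋯ ⊗ M (n-1)` of a finite family of objects
(with the empty tensor product being the unit object). -/
def finTensorObj : ∀ {n : ℕ}, (Fin n → C) → C
  | 0, _ => 𝟙_ C
  | n + 1, M => finTensorObj (fun i => M i.castSucc) ⊗ M (Fin.last n)

/-- The iterated tensor product `f 0 ⊗ f 1 ⊗ ⋯ ⊗ f (n-1)` of a finite family of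
morphisms. -/
def finTensorHom : ∀ {n : ℕ} {A B : Fin n → C}, (∀ i, A i ⟶ B i) →
    (finTensorObj A ⟶ finTensorObj B)
  | 0, _, _, _ => 𝟙 (𝟙_ C)
  | n + 1, _, _, f => finTensorHom (fun i => f i.castSucc) ⊗ₘ f (Fin.last n)

/-- Given a family of morphisms `f i : A i ⟶ B i` and an index `k`, the family of
morphisms from the family `B` updated at `k` by `A k` back to `B`, which is `f k` in the
`k`-th spot and the identity elsewhere. -/
def updateHom {n : ℕ} {A B : Fin n → C} (f : ∀ i, A i ⟶ B i) (k i : Fin n) :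
    Function.update B k (A k) i ⟶ B i :=
  if h : i = k then
    eqToHom (show Function.update B k (A k) i = A i by subst h; simp) ≫ f i
  else eqToHom (by simp [Function.update_of_ne h])

/-! ### Auxiliary lemmas -/

lemma finTensorObj_succ {n : ℕ} (M : Fin (n + 1) → C) :
    finTensorObj M = finTensorObj (fun i => M i.castSucc) ⊗ M (Fin.last n) := rfl

lemma finTensorHom_succ {n : ℕ} {A B : Fin (n + 1) → C} (f : ∀ i, A i ⟶ B i) :
    finTensorHom f = finTensorHom (fun i => f i.castSucc) ⊗ₘ f (Fin.last n) := rfl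

lemma finTensorHom_id : ∀ {n : ℕ} (A : Fin n → C),
    finTensorHom (fun i => 𝟙 (A i)) = 𝟙 (finTensorObj A)
  | 0, _ => rfl
  | n + 1, A => by
    rw [finTensorHom_succ, finTensorHom_id (fun i => A i.castSucc)]
    exact id_tensorHom_id _ _

lemma finTensorHom_congr {n : ℕ} {A A' B : Fin n → C} (hA : A = A')
    (φ : ∀ i, A i ⟶ B i) (φ' : ∀ i, A' i ⟶ B i)
    (h : ∀ i, φ i = eqToHom (congrFun hA i) ≫ φ' i) :
    finTensorHom φ = eqToHom (congrArg finTensorObj hA) ≫ finTensorHom φ' := by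
  subst hA
  simp only [eqToHom_refl, Category.id_comp] at h ⊢
  exact congrArg _ (funext h)

lemma eqToHom_comp_tensor_eqToHom {X X' Y Y' Z : C} (hX : X = X') (g : X' ⟶ Z) (hY : Y = Y') :
    (eqToHom hX ≫ g) ⊗ₘ eqToHom hY = eqToHom (by rw [hX, hY]) ≫ (g ▷ Y') := by
  subst hX hY; simp

lemma eqToHom_tensor_eqToHom_comp {X X' Y Y' Z : C} (hX : X = X') (hY : Y = Y') (g : Y' ⟶ Z) :
    eqToHom hX ⊗ₘ (eqToHom hY ≫ g) = eqToHom (by rw [hX, hY]) ≫ (X' ◁ g) := by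
  subst hX hY; simp

lemma update_castSucc_obj {n : ℕ} (M' M : Fin (n + 1) → C) (j : Fin n) :
    (fun i : Fin n => Function.update M j.castSucc (M' j.castSucc) i.castSucc)
      = Function.update (fun i : Fin n => M i.castSucc) j (M' j.castSucc) := by
  funext i
  rcases eq_or_ne i j with rfl | h
  · simp
  · rw [Function.update_of_ne (by simpa using h), Function.update_of_ne h]

lemma update_last_castSucc_obj {n : ℕ} (M' M : Fin (n + 1) → C) :
    (fun i : Fin n => Function.update M (Fin.last n) (M' (Fin.last n)) i.castSucc)
      = fun i : Fin n => M i.castSucc :=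
  funext fun i => Function.update_of_ne (Fin.castSucc_lt_last i).ne _ _

lemma update_obj_eq₁ {n : ℕ} (M' M : Fin (n + 1) → C) (j : Fin n) :
    finTensorObj (Function.update M j.castSucc (M' j.castSucc)) =
      finTensorObj (Function.update (fun i : Fin n => M i.castSucc) j (M' j.castSucc))
        ⊗ M (Fin.last n) := by
  rw [finTensorObj_succ, update_castSucc_obj,
    Function.update_of_ne (Fin.castSucc_lt_last j).ne']

lemma update_obj_eq₂ {n : ℕ} (M' M : Fin (n + 1) → C) :
    finTensorObj (Function.update M (Fin.last n) (M' (Fin.last n))) =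
      finTensorObj (fun i : Fin n => M i.castSucc) ⊗ M' (Fin.last n) := by
  rw [finTensorObj_succ, update_last_castSucc_obj, Function.update_self]

lemma updateHom_castSucc_eq {n : ℕ} {M' M : Fin (n + 1) → C} (f : ∀ i, M' i ⟶ M i)
    (j : Fin n) :
    finTensorHom (updateHom f j.castSucc) = eqToHom (update_obj_eq₁ M' M j) ≫
      (finTensorHom (updateHom (fun i => f i.castSucc) j) ▷ M (Fin.last n)) := by
  rw [finTensorHom_succ]
  have h1 : finTensorHom (fun i : Fin n => updateHom f j.castSucc i.castSucc)
      = eqToHom (congrArg finTensorObj (update_castSucc_obj M' M j)) ≫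
        finTensorHom (updateHom (fun i => f i.castSucc) j) := by
    refine finTensorHom_congr (update_castSucc_obj M' M j) _ _ (fun i => ?_)
    rcases eq_or_ne i j with rfl | h
    · simp [updateHom]
    · simp [updateHom, dif_neg ((Fin.castSucc_injective n).ne h), dif_neg h]
  have h2 : updateHom f j.castSucc (Fin.last n) =
      eqToHom (Function.update_of_ne (Fin.castSucc_lt_last j).ne' _ _) := by
    simp [updateHom, dif_neg (Fin.castSucc_lt_last j).ne']
  rw [h1, h2]
  exact eqToHom_comp_tensor_eqToHom _ _ _

lemma updateHom_last_eq {n : ℕ} {M' M : Fin (n + 1) → C} (f : ∀ i, M' i ⟶ M i) :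
    finTensorHom (updateHom f (Fin.last n)) = eqToHom (update_obj_eq₂ M' M) ≫
      (finTensorObj (fun i : Fin n => M i.castSucc) ◁ f (Fin.last n)) := by
  rw [finTensorHom_succ]
  have h1 : finTensorHom (fun i : Fin n => updateHom f (Fin.last n) i.castSucc)
      = eqToHom (congrArg finTensorObj (update_last_castSucc_obj M' M)) ≫
        finTensorHom (fun i : Fin n => 𝟙 (M i.castSucc)) := by
    refine finTensorHom_congr (update_last_castSucc_obj M' M) _ _ (fun i => ?_)
    simp [updateHom, dif_neg (Fin.castSucc_lt_last i).ne]
  have h2 : updateHom f (Fin.last n) (Fin.last n) =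
      eqToHom (Function.update_self _ _ _) ≫ f (Fin.last n) := by
    simp [updateHom]
  rw [h1, finTensorHom_id, Category.comp_id, h2]
  exact eqToHom_tensor_eqToHom_comp _ _ _

section Abelian

variable [Abelian C] [MonoidalPreadditive C]

/-- `g : B ⟶ E` is "the cokernel of the family `u`". -/
structure IsCokerFam {ι : Type*} {A : ι → C} {B E : C}
    (u : ∀ k, A k ⟶ B) (g : B ⟶ E) : Prop where
  w : ∀ k, u k ≫ g = 0
  epi : Epi g
  fac : ∀ {T : C} (t : B ⟶ T), (∀ k, u k ≫ t = 0) → ∃ t', g ≫ t' = t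

lemma epi_map_of_epi (F : C ⥤ C) [F.PreservesZeroMorphisms] {A B : C} (g : A ⟶ B)
    [PreservesColimit (parallelPair g 0) F] [Epi g] : Epi (F.map g) := by
  let c : CokernelCofork g := CokernelCofork.ofπ (0 : B ⟶ (0 : C)) comp_zero
  have hc : IsColimit c := CokernelCofork.IsColimit.ofπ _ _
    (fun g' hg' => 0)
    (fun g' hg' => by rw [comp_zero, zero_of_epi_comp g hg'])
    (fun g' hg' m hm => (isZero_zero C).eq_of_src m 0)
  have h2 := CokernelCofork.mapIsColimit (f := g) (c := c) hc F
  refine Preadditive.epi_of_cancel_zero _ (fun {R} h hh => ?_)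
  obtain ⟨l, hl⟩ := CokernelCofork.IsColimit.desc' h2 h hh
  rw [← hl]
  have : Cofork.π (c.map F) = F.map (0 : B ⟶ (0 : C)) := rfl
  rw [this, F.map_zero]
  exact zero_comp

lemma biproduct_desc_eq_sum {ι : Type*} [Fintype ι] [DecidableEq ι] {A : ι → C} {B : C}
    (u : ∀ k, A k ⟶ B) :
    biproduct.desc u = ∑ k, biproduct.π A k ≫ u k := by
  apply biproduct.hom_ext'
  intro k
  rw [biproduct.ι_desc, Preadditive.comp_sum]
  simp only [← Category.assoc]
  rw [Finset.sum_eq_single k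
    (fun j _ hj => by rw [biproduct.ι_π_ne _ (Ne.symm hj), zero_comp])
    (fun h => absurd (Finset.mem_univ k) h),
    biproduct.ι_π_self, Category.id_comp]

namespace IsCokerFam

variable {ι : Type} [Fintype ι] [DecidableEq ι] {A : ι → C} {B E : C}
  {u : ∀ k, A k ⟶ B} {g : B ⟶ E}

lemma desc_w (h : IsCokerFam u g) : biproduct.desc u ≫ g = 0 := by
  apply biproduct.hom_ext'
  intro k
  simp [h.w k]

noncomputable def isColimit (h : IsCokerFam u g) (w : biproduct.desc u ≫ g = 0) :
    IsColimit (CokernelCofork.ofπ g w) := by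
  have := h.epi
  refine CokernelCofork.IsColimit.ofπ' g w (fun {T} t ht => ?_)
  have h0 : ∀ k, u k ≫ t = 0 := fun k => by
    rw [← biproduct.ι_desc u k, Category.assoc, ht, comp_zero]
  exact ⟨(h.fac t h0).choose, (h.fac t h0).choose_spec⟩

lemma whiskerRight (h : IsCokerFam u g) (X : C)
    (hpres : PreservesColimit (parallelPair (biproduct.desc u) 0) (tensorRight X)) :
    IsCokerFam (fun k => u k ▷ X) (g ▷ X) := by
  haveI := hpres
  have hcolim := CokernelCofork.mapIsColimit (f := biproduct.desc u) _ (h.isColimit h.desc_w) (tensorRight X)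
  refine ⟨fun k => ?_, ?_, fun {T} t ht => ?_⟩
  · rw [← comp_whiskerRight, h.w k, MonoidalPreadditive.zero_whiskerRight]
  · have := epi_of_isColimit_cofork hcolim
    exact this
  · have hz : (tensorRight X).map (biproduct.desc u) ≫ t = 0 := by
      have : (tensorRight X).map (biproduct.desc u) = ∑ k, (biproduct.π A k ▷ X) ≫ (u k ▷ X) := by
        simp only [Functor.flip_obj_map, curriedTensor_map_app, biproduct_desc_eq_sum u,
          sum_whiskerRight, comp_whiskerRight]
      rw [this, Preadditive.sum_comp]
      refine Finset.sum_eq_zero (fun k _ => ?_)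
      rw [Category.assoc, ht k, comp_zero]
    obtain ⟨l, hl⟩ := CokernelCofork.IsColimit.desc' hcolim t hz
    exact ⟨l, hl⟩

lemma whiskerLeft (h : IsCokerFam u g) (X : C)
    (hpres : PreservesColimit (parallelPair (biproduct.desc u) 0) (tensorLeft X)) :
    IsCokerFam (fun k => X ◁ u k) (X ◁ g) := by
  haveI := hpres
  have hcolim := CokernelCofork.mapIsColimit (f := biproduct.desc u) _ (h.isColimit h.desc_w) (tensorLeft X)
  refine ⟨fun k => ?_, ?_, fun {T} t ht => ?_⟩
  · rw [← MonoidalCategory.whiskerLeft_comp, h.w k, MonoidalPreadditive.whiskerLeft_zero]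
  · have := epi_of_isColimit_cofork hcolim
    exact this
  · have hz : (tensorLeft X).map (biproduct.desc u) ≫ t = 0 := by
      have : (tensorLeft X).map (biproduct.desc u) = ∑ k, (X ◁ biproduct.π A k) ≫ (X ◁ u k) := by
        simp only [curriedTensor_obj_map, biproduct_desc_eq_sum u,
          whiskerLeft_sum, MonoidalCategory.whiskerLeft_comp]
      rw [this, Preadditive.sum_comp]
      refine Finset.sum_eq_zero (fun k _ => ?_)
      rw [Category.assoc, ht k, comp_zero]
    obtain ⟨l, hl⟩ := CokernelCofork.IsColimit.desc' hcolim t hz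
    exact ⟨l, hl⟩

end IsCokerFam

lemma isCokerFam_of_exact {A B E : C} (f : A ⟶ B) (g : B ⟶ E) (w : f ≫ g = 0)
    (hex : (ShortComplex.mk f g w).Exact) (hepi : Epi g) :
    IsCokerFam (fun _ : Fin 1 => f) g := by
  haveI : Epi (ShortComplex.mk f g w).g := hepi
  refine ⟨fun _ => w, hepi, fun {T} t ht => ?_⟩
  obtain ⟨l, hl⟩ := CokernelCofork.IsColimit.desc' hex.gIsCokernel t (ht 0)
  exact ⟨l, hl⟩

lemma whiskerRight_epi
    (hright : ∀ (X : C) ⦃A B : C⦄ (u : A ⟶ B),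
      PreservesColimit (parallelPair u 0) (tensorLeft X) ∧
      PreservesColimit (parallelPair u 0) (tensorRight X))
    {A B : C} (g : A ⟶ B) (hg : Epi g) (X : C) : Epi (g ▷ X) := by
  haveI := (hright X g).2
  haveI := hg
  simpa using epi_map_of_epi (tensorRight X) g

lemma whiskerLeft_epi
    (hright : ∀ (X : C) ⦃A B : C⦄ (u : A ⟶ B),
      PreservesColimit (parallelPair u 0) (tensorLeft X) ∧
      PreservesColimit (parallelPair u 0) (tensorRight X))
    {A B : C} (g : A ⟶ B) (hg : Epi g) (X : C) : Epi (X ◁ g) := by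
  haveI := (hright X g).1
  haveI := hg
  simpa using epi_map_of_epi (tensorLeft X) g

lemma isCokerFam_main
    (hright : ∀ (X : C) ⦃A B : C⦄ (u : A ⟶ B),
      PreservesColimit (parallelPair u 0) (tensorLeft X) ∧
      PreservesColimit (parallelPair u 0) (tensorRight X)) :
    ∀ {n : ℕ} {M' M M'' : Fin n → C}
      (f : ∀ i, M' i ⟶ M i) (p : ∀ i, M i ⟶ M'' i)
      (wi : ∀ i, f i ≫ p i = 0)
      (hex : ∀ i, (ShortComplex.mk (f i) (p i) (wi i)).Exact)
      (hepi : ∀ i, Epi (p i)),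
      IsCokerFam (fun k => finTensorHom (updateHom f k)) (finTensorHom p) := by
  intro n
  induction n with
  | zero =>
    intro M' M M'' f p wi hex hepi
    exact ⟨fun k => k.elim0, by show Epi (𝟙 (𝟙_ C)); infer_instance,
      fun {T} t _ => ⟨t, by show 𝟙 _ ≫ t = t; simp⟩⟩
  | succ n ih =>
    intro M' M M'' f p wi hex hepi
    have h₀ := ih (fun i => f i.castSucc) (fun i => p i.castSucc)
      (fun i => wi i.castSucc) (fun i => hex i.castSucc) (fun i => hepi i.castSucc)
    have hlast := isCokerFam_of_exact (f (Fin.last n)) (p (Fin.last n)) (wi (Fin.last n))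
      (hex (Fin.last n)) (hepi (Fin.last n))
    set B := finTensorObj (fun i : Fin n => M i.castSucc) with hB
    set Cc := finTensorObj (fun i : Fin n => M'' i.castSucc) with hCc
    set Mn := M (Fin.last n) with hMn
    set π : B ⟶ Cc := finTensorHom (fun i => p i.castSucc) with hπ
    -- whiskered coker families
    have hR := h₀.whiskerRight Mn (hright Mn _).2
    have hL := hlast.whiskerLeft Cc (hright Cc _).1
    have hgdef : finTensorHom p = (π ▷ Mn) ≫ (Cc ◁ p (Fin.last n)) := by
      rw [finTensorHom_succ p, MonoidalCategory.tensorHom_def]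
    refine ⟨fun k => ?_, ?_, fun {T} t ht => ?_⟩
    · -- vanishing
      induction k using Fin.lastCases with
      | last =>
        rw [updateHom_last_eq f, finTensorHom_succ p, tensorHom_def' π (p (Fin.last n))]
        erw [Category.assoc, ← Category.assoc (B ◁ f (Fin.last n)),
          ← MonoidalCategory.whiskerLeft_comp, wi (Fin.last n)]
        simp
        exact zero_comp
      | cast j =>
        erw [updateHom_castSucc_eq f j, hgdef, Category.assoc,
          ← Category.assoc (_ ▷ Mn) (π ▷ Mn), ← comp_whiskerRight, h₀.w j]
        simp
        exact zero_comp
    · -- epi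
      rw [hgdef]
      haveI := whiskerRight_epi hright π h₀.epi Mn
      haveI := whiskerLeft_epi hright (p (Fin.last n)) (hepi _) Cc
      exact epi_comp (π ▷ Mn) (Cc ◁ p (Fin.last n))
    · -- factorization
      have h1 : ∀ j : Fin n,
          ((finTensorHom (updateHom (fun i => f i.castSucc) j)) ▷ Mn) ≫ t = 0 := by
        intro j
        have hh := ht j.castSucc
        erw [updateHom_castSucc_eq f j, Category.assoc] at hh
        exact zero_of_epi_comp _ hh
      have h2 : (B ◁ f (Fin.last n)) ≫ t = 0 := by
        have hh := ht (Fin.last n)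
        erw [updateHom_last_eq f, Category.assoc] at hh
        exact zero_of_epi_comp _ hh
      obtain ⟨t₁, ht₁⟩ := hR.fac t h1
      have h3 : (Cc ◁ f (Fin.last n)) ≫ t₁ = 0 := by
        haveI := whiskerRight_epi hright π h₀.epi (M' (Fin.last n))
        refine zero_of_epi_comp (π ▷ M' (Fin.last n)) ?_
        rw [← Category.assoc, ← whisker_exchange, Category.assoc, ht₁]
        exact h2
      obtain ⟨t₂, ht₂⟩ := hL.fac t₁ (fun _ => h3)
      exact ⟨t₂, by erw [hgdef, Category.assoc, ht₂, ht₁]⟩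

end Abelian

/-- **Key step in Proposition p4 of Kahn, "Exactness and faithfulness of monoidal
functors"**. In an abelian monoidal category with biadditive, right exact tensor product,
given exact sequences `M'_i → M_i → M''_i → 0` for `i = 1, …, n`, the sequence
`⨁ₖ (M_1 ⊗ ⋯ ⊗ M'_k ⊗ ⋯ ⊗ M_n) → M_1 ⊗ ⋯ ⊗ M_n → M''_1 ⊗ ⋯ ⊗ M''_n → 0` is exact,
where the `k`-th component of the first morphism is `𝟙 ⊗ ⋯ ⊗ f_k ⊗ ⋯ ⊗ 𝟙`. -/
theorem tensor_right_exact_many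
    [Abelian C] [MonoidalPreadditive C]
    (hright : ∀ (X : C) ⦃A B : C⦄ (u : A ⟶ B),
      PreservesColimit (parallelPair u 0) (tensorLeft X) ∧
      PreservesColimit (parallelPair u 0) (tensorRight X))
    {n : ℕ} (hn : 1 ≤ n)
    {M' M M'' : Fin n → C}
    (f : ∀ i, M' i ⟶ M i) (p : ∀ i, M i ⟶ M'' i)
    (wi : ∀ i, f i ≫ p i = 0)
    (hex : ∀ i, (ShortComplex.mk (f i) (p i) (wi i)).Exact)
    (hepi : ∀ i, Epi (p i))
    (w : biproduct.desc (fun k => finTensorHom (updateHom f k)) ≫ finTensorHom p = 0) :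
    Epi (finTensorHom p) ∧
    (ShortComplex.mk (biproduct.desc (fun k => finTensorHom (updateHom f k)))
      (finTensorHom p) w).Exact := by
  have h := isCokerFam_main hright f p wi hex hepi
  exact ⟨h.epi, ShortComplex.exact_of_g_is_cokernel _ (h.isColimit w)⟩
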